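/- Let S be a finite set, let p, q ∈ Σ_S, and let f : S → ℝ satisfy 0 ≤ f(s) ≤ 1 for all s ∈ S. If qf > pf, then KL(p, q) ≥ (qf − pf)² / ( 2·( Var_q(f) + (qf − pf)/3 ) ). -/

import Mathlib

open Finset

lemma aux_one_sub_mul_exp_le (x : ℝ) : (1 - x) * Real.exp x ≤ 1 := by
  calc (1 - x) * Real.exp x ≤ Real.exp (-x) * Real.exp x := by
        apply mul_le_mul_of_nonneg_right _ (Real.exp_pos x).le
        linarith [Real.add_one_le_exp (-x)]
    _ = 1 := by rw [← Real.exp_add]; simp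

lemma hasDerivAtG (x : ℝ) :
    HasDerivAt (fun y => 2 + y + (y - 2) * Real.exp y) (1 + (x - 1) * Real.exp x) x := by
  have h1 : HasDerivAt (fun y : ℝ => (y - 2) * Real.exp y)
      (1 * Real.exp x + (x - 2) * Real.exp x) x :=
    ((hasDerivAt_id x).sub_const 2).mul (Real.hasDerivAt_exp x)
  have h2 : HasDerivAt (fun y : ℝ => 2 + y) 1 x := by
    simpa using (hasDerivAt_id x).const_add 2
  have h3 := h2.add h1
  exact h3.congr_deriv (by ring)

lemma G_nonneg (x : ℝ) (hx : 0 ≤ x) : 0 ≤ 2 + x + (x - 2) * Real.exp x := by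
  have hmono : Monotone (fun y => 2 + y + (y - 2) * Real.exp y) := by
    apply monotone_of_deriv_nonneg
    · intro y; exact (hasDerivAtG y).differentiableAt
    · intro y
      rw [(hasDerivAtG y).deriv]
      nlinarith [aux_one_sub_mul_exp_le y, Real.exp_pos y]
  have h0 := hmono hx
  simp only [Real.exp_zero] at h0
  norm_num at h0
  linarith [h0]

lemma hasDerivAtF (x : ℝ) :
    HasDerivAt (fun y => 3 + 2*y + y^2/2 - (3 - y) * Real.exp y)
      (2 + x + (x - 2) * Real.exp x) x := by
  have h1 : HasDerivAt (fun y : ℝ => (3 - y) * Real.exp y)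
      ((-1) * Real.exp x + (3 - x) * Real.exp x) x :=
    (((hasDerivAt_id x).const_sub 3)).mul (Real.hasDerivAt_exp x)
  have h2 : HasDerivAt (fun y : ℝ => 3 + 2*y) 2 x := by
    simpa using ((hasDerivAt_id x).const_mul 2).const_add 3
  have h4 : HasDerivAt (fun y : ℝ => y^2/2) x x := by
    have := (hasDerivAt_pow 2 x).div_const 2
    simpa using this
  have h5 := (h2.add h4).sub h1
  exact h5.congr_deriv (by ring)

lemma lemA (x : ℝ) (hx : 0 ≤ x) : (3 - x) * Real.exp x ≤ 3 + 2*x + x^2/2 := by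
  have hmono : MonotoneOn (fun y => 3 + 2*y + y^2/2 - (3 - y) * Real.exp y) (Set.Ici 0) := by
    apply monotoneOn_of_deriv_nonneg (convex_Ici 0)
    · exact Continuous.continuousOn (by
        continuity)
    · intro y _; exact (hasDerivAtF y).differentiableAt.differentiableWithinAt
    · intro y hy
      rw [(hasDerivAtF y).deriv]
      rw [interior_Ici] at hy
      exact G_nonneg y (le_of_lt hy)
  have h0 := hmono (Set.self_mem_Ici) (Set.mem_Ici.mpr hx) hx
  simp only [Real.exp_zero] at h0
  norm_num at h0
  linarith [h0]

lemma exp_le_quad_of_nonpos (x : ℝ) (hx : x ≤ 0) : Real.exp x ≤ 1 + x + x^2/2 := by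
  have hanti : Antitone (fun y : ℝ => 1 + y + y^2/2 - Real.exp y) := by
    apply antitone_of_deriv_nonpos
    · apply Differentiable.sub _ Real.differentiable_exp
      apply Differentiable.add
      · exact (differentiable_id.const_add 1)
      · exact (differentiable_pow 2).div_const 2
    · intro y
      have h1 : HasDerivAt (fun y : ℝ => 1 + y + y^2/2 - Real.exp y)
          (1 + y - Real.exp y) y := by
        have ha : HasDerivAt (fun z : ℝ => 1 + z) 1 y := by
          simpa using (hasDerivAt_id y).const_add 1
        have hb : HasDerivAt (fun z : ℝ => z^2/2) y y := by
          simpa using (hasDerivAt_pow 2 y).div_const 2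
        have := (ha.add hb).sub (Real.hasDerivAt_exp y)
        exact this
      rw [h1.deriv]
      linarith [Real.add_one_le_exp y]
  have h0 := hanti hx
  simp only [Real.exp_zero] at h0
  norm_num at h0
  linarith [h0]

lemma exp_quad (t x : ℝ) (ht0 : 0 < t) (ht1 : t < 1) (hx : x ≤ 3*t) :
    Real.exp x ≤ 1 + x + x^2/(2*(1-t)) := by
  have hd : (0:ℝ) < 2*(1-t) := by linarith
  rcases le_or_gt 0 x with h0 | h0
  · have hA := lemA x h0
    have he : 0 ≤ Real.exp x - 1 - x := by nlinarith [Real.add_one_le_exp x]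
    have key : (Real.exp x - 1 - x) * (2*(1-t)) ≤ x^2 := by nlinarith
    have h2 : Real.exp x - 1 - x ≤ x^2/(2*(1-t)) := by
      rw [le_div_iff₀ hd]; exact key
    linarith
  · have h1 := exp_le_quad_of_nonpos x (le_of_lt h0)
    have h2 : x^2/2 ≤ x^2/(2*(1-t)) := by
      apply div_le_div_of_nonneg_left (sq_nonneg x) hd
      linarith
    linarith

lemma real_main {S : Type*} [Fintype S]
    (p q : S → ℝ) (hp : ∀ s, 0 ≤ p s) (hpsum : ∑ s, p s = 1)
    (hq : ∀ s, 0 ≤ q s) (hqsum : ∑ s, q s = 1)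
    (f : S → ℝ) (hf : ∀ s, 0 ≤ f s ∧ f s ≤ 1)
    (hgap : (∑ s, p s * f s) < ∑ s, q s * f s)
    (h2 : ∀ s, p s ≠ 0 → q s ≠ 0) :
    ((∑ s, q s * f s) - ∑ s, p s * f s) ^ 2
        / (2 * ((∑ s, q s * (f s - ∑ s', q s' * f s') ^ 2)
            + ((∑ s, q s * f s) - ∑ s, p s * f s) / 3))
      ≤ ∑ s, p s * Real.log (p s / q s) := by
  set m := ∑ s, q s * f s with hm
  set pf := ∑ s, p s * f s with hpf
  set V := ∑ s, q s * (f s - m) ^ 2 with hV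
  set D : ℝ := m - pf with hD
  have hΔ : 0 < D := by rw [hD]; linarith
  have hV0 : 0 ≤ V := Finset.sum_nonneg fun s _ => mul_nonneg (hq s) (sq_nonneg _)
  have hVpos : 0 < V := by
    rcases hV0.lt_or_eq with h | h
    · exact h
    · exfalso
      have hzero : ∀ s ∈ Finset.univ, q s * (f s - m) ^ 2 = 0 :=
        (Finset.sum_eq_zero_iff_of_nonneg
          (fun s _ => mul_nonneg (hq s) (sq_nonneg _))).mp h.symm
      have hfm : ∀ s, p s * f s = p s * m := by
        intro s
        rcases eq_or_ne (p s) 0 with hps | hps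
        · rw [hps, zero_mul, zero_mul]
        · have hqs : q s ≠ 0 := h2 s hps
          have h5 := hzero s (Finset.mem_univ s)
          have h3 : (f s - m) ^ 2 = 0 := by
            rcases mul_eq_zero.mp h5 with h4 | h4
            · exact absurd h4 hqs
            · exact h4
          have h6 : f s = m := by nlinarith [sq_nonneg (f s - m)]
          rw [h6]
      have hpm : pf = m := by
        rw [hpf, Finset.sum_congr rfl (fun s _ => hfm s), ← Finset.sum_mul, hpsum, one_mul]
      rw [hD] at hΔ; linarith
  have hden : 0 < V + D / 3 := by linarith
  set L : ℝ := D / (V + D / 3) with hL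
  have hL0 : 0 < L := div_pos hΔ hden
  have hL3 : L < 3 := by
    rw [hL, div_lt_iff₀ hden]; linarith
  set t : ℝ := L / 3 with ht
  have ht0 : 0 < t := by rw [ht]; linarith
  have ht1 : t < 1 := by rw [ht]; linarith
  have h1tpos : 0 < 1 - t := by linarith
  have hm0 : 0 ≤ m := Finset.sum_nonneg fun s _ => mul_nonneg (hq s) (hf s).1
  have hm1 : m ≤ 1 := by
    rw [hm]
    calc ∑ s, q s * f s ≤ ∑ s, q s := Finset.sum_le_sum fun s _ => by
          nlinarith [(hf s).2, hq s]
      _ = 1 := hqsum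
  set g : S → ℝ := fun s => L * (m - f s) with hg
  have hg_le : ∀ s, g s ≤ 3 * t := by
    intro s
    have h1 : m - f s ≤ 1 := by linarith [(hf s).1]
    have h2' : L * (m - f s) ≤ L * 1 := mul_le_mul_of_nonneg_left h1 hL0.le
    have : g s = L * (m - f s) := rfl
    rw [this, ht]; linarith
  set Z := ∑ s, q s * Real.exp (g s) with hZ
  have hZpos : 0 < Z := by
    have hex : ∃ s : S, q s ≠ 0 := by
      by_contra hc
      push_neg at hc
      rw [Finset.sum_eq_zero (fun s _ => hc s)] at hqsum
      norm_num at hqsum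
    obtain ⟨s0, hs0⟩ := hex
    have hq0 : 0 < q s0 := (hq s0).lt_of_ne' hs0
    have hsl : q s0 * Real.exp (g s0) ≤ ∑ x, q x * Real.exp (g x) := by
      simpa using Finset.single_le_sum
        (f := fun s => q s * Real.exp (g s))
        (fun s _ => mul_nonneg (hq s) (Real.exp_pos _).le) (Finset.mem_univ s0)
    have hpos0 : 0 < q s0 * Real.exp (g s0) := mul_pos hq0 (Real.exp_pos _)
    rw [hZ]; linarith
  have e1 : ∑ s, q s * g s = 0 := by
    have h : ∀ s ∈ Finset.univ, q s * g s = L * m * q s - L * (q s * f s) := fun s _ => by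
      simp only [hg]; ring
    rw [Finset.sum_congr rfl h, Finset.sum_sub_distrib, ← Finset.mul_sum, ← Finset.mul_sum,
      hqsum, ← hm]
    ring
  have e2 : ∑ s, q s * (g s) ^ 2 = L ^ 2 * V := by
    have h : ∀ s ∈ Finset.univ, q s * (g s) ^ 2 = L ^ 2 * (q s * (f s - m) ^ 2) := fun s _ => by
      simp only [hg]; ring
    rw [Finset.sum_congr rfl h, ← Finset.mul_sum, ← hV]
  have e3 : ∑ s, p s * g s = L * D := by
    have h : ∀ s ∈ Finset.univ, p s * g s = L * m * p s - L * (p s * f s) := fun s _ => by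
      simp only [hg]; ring
    rw [Finset.sum_congr rfl h, Finset.sum_sub_distrib, ← Finset.mul_sum, ← Finset.mul_sum,
      hpsum, ← hpf, hD]
    ring
  have hZ1 : Z ≤ 1 + 1/(2*(1-t)) * (L^2*V) := by
    have hptwise : ∀ s ∈ Finset.univ,
        q s * Real.exp (g s) ≤ q s + q s * g s + (q s * (g s)^2) * (1/(2*(1-t))) := by
      intro s _
      have h := exp_quad t (g s) ht0 ht1 (hg_le s)
      calc q s * Real.exp (g s) ≤ q s * (1 + g s + (g s)^2/(2*(1-t))) :=
            mul_le_mul_of_nonneg_left h (hq s)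
        _ = q s + q s * g s + (q s * (g s)^2) * (1/(2*(1-t))) := by ring
    calc Z ≤ ∑ s, (q s + q s * g s + (q s * (g s)^2) * (1/(2*(1-t)))) :=
          Finset.sum_le_sum hptwise
      _ = (∑ s, q s) + (∑ s, q s * g s) + (∑ s, q s * (g s)^2) * (1/(2*(1-t))) := by
          rw [Finset.sum_add_distrib, Finset.sum_add_distrib, ← Finset.sum_mul]
      _ = 1 + 1/(2*(1-t)) * (L^2*V) := by rw [hqsum, e1, e2]; ring
  have hlogZ : Real.log Z ≤ 1/(2*(1-t)) * (L^2*V) := by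
    have h := Real.log_le_sub_one_of_pos hZpos
    linarith
  have key : ∀ s ∈ Finset.univ,
      p s - q s * Real.exp (g s) / Z ≤ p s * (Real.log (p s / q s) - g s + Real.log Z) := by
    intro s _
    rcases eq_or_ne (p s) 0 with hps | hps
    · have hge : 0 ≤ q s * Real.exp (g s) / Z :=
        div_nonneg (mul_nonneg (hq s) (Real.exp_pos _).le) hZpos.le
      rw [hps]
      simp only [zero_sub, zero_mul]
      linarith
    · have hps' : 0 < p s := (hp s).lt_of_ne' hps
      have hqs' : 0 < q s := (hq s).lt_of_ne' (h2 s hps)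
      have hxpos : 0 < q s * Real.exp (g s) / (p s * Z) :=
        div_pos (mul_pos hqs' (Real.exp_pos _)) (mul_pos hps' hZpos)
      have hlog := Real.log_le_sub_one_of_pos hxpos
      have hlogeq : Real.log (q s * Real.exp (g s) / (p s * Z))
          = Real.log (q s) + g s - (Real.log (p s) + Real.log Z) := by
        rw [Real.log_div (mul_pos hqs' (Real.exp_pos _)).ne' (mul_pos hps' hZpos).ne',
          Real.log_mul hqs'.ne' (Real.exp_pos _).ne', Real.log_mul hps'.ne' hZpos.ne',
          Real.log_exp]
      have hmul := mul_le_mul_of_nonneg_left hlog (hp s)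
      have hcancel : p s * (q s * Real.exp (g s) / (p s * Z)) = q s * Real.exp (g s) / Z := by
        field_simp
      have hmul2 : p s * (Real.log (q s) + g s - (Real.log (p s) + Real.log Z))
          ≤ q s * Real.exp (g s) / Z - p s := by
        calc p s * (Real.log (q s) + g s - (Real.log (p s) + Real.log Z))
            = p s * Real.log (q s * Real.exp (g s) / (p s * Z)) := by rw [hlogeq]
          _ ≤ p s * (q s * Real.exp (g s) / (p s * Z) - 1) := hmul
          _ = q s * Real.exp (g s) / Z - p s := by rw [mul_sub, hcancel, mul_one]
      have hlogpq : Real.log (p s / q s) = Real.log (p s) - Real.log (q s) :=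
        Real.log_div hps'.ne' hqs'.ne'
      have hexpand : p s * (Real.log (p s / q s) - g s + Real.log Z)
          = -(p s * (Real.log (q s) + g s - (Real.log (p s) + Real.log Z))) := by
        rw [hlogpq]; ring
      rw [hexpand]
      linarith [hmul2]
  have hsum := Finset.sum_le_sum key
  have hlhs : ∑ s, (p s - q s * Real.exp (g s) / Z) = 0 := by
    rw [Finset.sum_sub_distrib, hpsum, ← Finset.sum_div, ← hZ, div_self hZpos.ne']
    ring
  have hrhs : ∑ s, p s * (Real.log (p s / q s) - g s + Real.log Z)
      = (∑ s, p s * Real.log (p s / q s)) - L * D + Real.log Z := by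
    have h : ∀ s ∈ Finset.univ, p s * (Real.log (p s / q s) - g s + Real.log Z)
        = p s * Real.log (p s / q s) - p s * g s + p s * Real.log Z := fun s _ => by ring
    rw [Finset.sum_congr rfl h, Finset.sum_add_distrib, Finset.sum_sub_distrib, e3,
      ← Finset.sum_mul, hpsum, one_mul]
  rw [hlhs, hrhs] at hsum
  have hLt : 1 - t = V / (V + D/3) := by
    rw [ht, hL]
    field_simp
    ring
  have hc : 1/(2*(1-t)) = (V + D/3)/(2*V) := by
    rw [hLt]
    field_simp
  have halg : L * D - 1/(2*(1-t)) * (L^2*V) = D^2 / (2*(V + D/3)) := by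
    rw [hc, hL]
    field_simp
    ring
  linarith [hsum, hlogZ, halg.ge, halg.le]

/-- Kullback–Leibler divergence between two finitely supported distributions, with the
conventions `0 · log(0/x) = 0` and `KL(p,q) = +∞` when `p(s) > 0` while `q(s) = 0`. -/
noncomputable def KLdiv {S : Type*} [Fintype S] (p q : S → ℝ) : EReal :=
  ∑ s, if p s = 0 then (0 : EReal)
    else if q s = 0 then (⊤ : EReal)
    else ((p s * Real.log (p s / q s) : ℝ) : EReal)

/-- For `p, q` in the simplex over a finite set and `f` with values in
`[0,1]`, if `qf > pf` then
`KL(p,q) ≥ (qf − pf)² / (2 (Var_q(f) + (qf − pf)/3))`. -/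
theorem kl_lower_bound {S : Type*} [Fintype S]
    (p q : S → ℝ) (hp : ∀ s, 0 ≤ p s) (hpsum : ∑ s, p s = 1)
    (hq : ∀ s, 0 ≤ q s) (hqsum : ∑ s, q s = 1)
    (f : S → ℝ) (hf : ∀ s, 0 ≤ f s ∧ f s ≤ 1)
    (hgap : (∑ s, p s * f s) < ∑ s, q s * f s) :
    (((((∑ s, q s * f s) - ∑ s, p s * f s) ^ 2
        / (2 * ((∑ s, q s * (f s - ∑ s', q s' * f s') ^ 2)
            + ((∑ s, q s * f s) - ∑ s, p s * f s) / 3))) : ℝ) : EReal)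
      ≤ KLdiv p q := by
  by_cases hcase : ∀ s, p s ≠ 0 → q s ≠ 0
  · have hK : KLdiv p q = ((∑ s, p s * Real.log (p s / q s) : ℝ) : EReal) := by
      rw [KLdiv]
      rw [show ((∑ s, p s * Real.log (p s / q s) : ℝ) : EReal)
          = ∑ s, ((p s * Real.log (p s / q s) : ℝ) : EReal) from
        map_sum (⟨⟨Real.toEReal, EReal.coe_zero⟩, EReal.coe_add⟩ : ℝ →+ EReal) _ _]
      apply Finset.sum_congr rfl
      intro s _
      by_cases hps : p s = 0
      · simp [hps]
      · rw [if_neg hps, if_neg (hcase s hps)]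
    rw [hK, EReal.coe_le_coe_iff]
    exact real_main p q hp hpsum hq hqsum f hf hgap hcase
  · push_neg at hcase
    obtain ⟨s0, hps0, hqs0⟩ := hcase
    classical
    have htop : KLdiv p q = ⊤ := by
      rw [KLdiv, ← Finset.sum_erase_add _ _ (Finset.mem_univ s0)]
      rw [if_neg hps0, if_pos hqs0]
      apply EReal.add_top_of_ne_bot
      refine Finset.sum_induction _ (· ≠ (⊥ : EReal)) (fun a b ha hb => ?_) (by simp)
        (fun s _ => ?_)
      · simp only [Ne, EReal.add_eq_bot_iff]
        tauto
      · split_ifs <;> first | exact EReal.coe_ne_bot _ | simp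
    rw [htop]
    exact le_top
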